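/- Let f : ℝ → ℝ admit an entire complex extension with Taylor coefficients c_k = f^{(k)}(0)/k!, let m ≥ 1 be an integer, and suppose x ↦ f(x) x^{-m} is integrable on [1, ∞). Then the limit as ε → 0⁺ of [∫_ε^∞ f(x) x^{-m} dx − (Σ_{k=0}^{m-2} c_k/((m-k-1) ε^{m-k-1}) − c_{m-1} ln ε)] exists and equals the limit as a → ∞ of [c_{m-1} ln a + Σ_{k=m}^{∞} c_k a^{k-m+1}/(k-m+1)], and in particular the latter limit exists. -/

import Mathlib

open Filter MeasureTheory Set

lemma abs_summable_aux {c : ℕ → ℝ} (h : ∀ x : ℝ, Summable fun k => c k * x ^ k)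
    {r : ℝ} (hr : 0 ≤ r) : Summable fun k => |c k| * r ^ k := by
  set R : ℝ := 2 * r + 1 with hR
  have hR0 : 0 < R := by positivity
  have hrR : r < R := by linarith
  have hb : BddAbove (Set.range fun k => |c k * R ^ k|) := by
    have := ((h R).tendsto_atTop_zero).abs
    simpa using this.bddAbove_range
  obtain ⟨C, hC⟩ := hb
  have hq : r / R < 1 := (div_lt_one hR0).mpr hrR
  have hq0 : 0 ≤ r / R := by positivity
  apply Summable.of_nonneg_of_le (fun k => by positivity)
    (fun k => ?_) (Summable.mul_left C (summable_geometric_of_lt_one hq0 hq))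
  have h1 : |c k * R ^ k| ≤ C := hC ⟨k, rfl⟩
  have : |c k| * r ^ k = |c k * R ^ k| * (r / R) ^ k := by
    rw [abs_mul, abs_of_pos (pow_pos hR0 k), div_pow, mul_assoc,
      mul_div_cancel₀ _ (ne_of_gt (pow_pos hR0 k))]
  rw [this]
  exact mul_le_mul_of_nonneg_right h1 (by positivity)

lemma abs_summable_shift {c : ℕ → ℝ} (h : ∀ x : ℝ, Summable fun k => c k * x ^ k)
    (m : ℕ) {r : ℝ} (hr : 0 ≤ r) : Summable fun j => |c (m + j)| * r ^ j := by
  set R : ℝ := max r 1 with hRdef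
  have hR1 : 1 ≤ R := le_max_right _ _
  have hR0 : 0 ≤ R := by linarith
  have hs : Summable fun j => |c (j + m)| * R ^ (j + m) :=
    (summable_nat_add_iff m).2 (abs_summable_aux h hR0)
  apply hs.of_nonneg_of_le (fun j => by positivity)
  intro j
  have h1 : r ^ j ≤ R ^ (j + m) := by
    calc r ^ j ≤ R ^ j := pow_le_pow_left₀ hr (le_max_left _ _) j
    _ ≤ R ^ (j + m) := pow_le_pow_right₀ hR1 (Nat.le_add_right _ _)
  rw [add_comm m j]
  exact mul_le_mul_of_nonneg_left h1 (abs_nonneg _)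

lemma Jpow {m k : ℕ} (hk : k + 2 ≤ m) {p q : ℝ} (hp : 0 < p) (hpq : p ≤ q) :
    ∫ x in Ioc p q, x ^ k / x ^ m =
      1 / (((m - k - 1 : ℕ) : ℝ) * p ^ (m - k - 1)) -
        1 / (((m - k - 1 : ℕ) : ℝ) * q ^ (m - k - 1)) := by
  have hq : 0 < q := lt_of_lt_of_le hp hpq
  rw [← intervalIntegral.integral_of_le hpq]
  have h0 : (0:ℝ) ∉ (Set.uIcc p q) := by
    rw [uIcc_of_le hpq]
    intro h
    exact absurd h.1 (not_le.mpr hp)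
  have hcong : EqOn (fun x : ℝ => x ^ k / x ^ m) (fun x : ℝ => x ^ ((k : ℤ) - m)) (Set.uIcc p q) := by
    intro x hx
    rw [uIcc_of_le hpq] at hx
    have hx0 : x ≠ 0 := ne_of_gt (lt_of_lt_of_le hp hx.1)
    simp only
    rw [← zpow_natCast x k, ← zpow_natCast x m, ← zpow_sub₀ hx0]
  rw [intervalIntegral.integral_congr hcong]
  have hne : (k : ℤ) - m ≠ -1 := by omega
  rw [integral_zpow (Or.inr ⟨hne, h0⟩)]
  set d : ℕ := m - k - 1 with hd
  have hdz : (k : ℤ) - m + 1 = -(d : ℤ) := by omega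
  have hd0 : 0 < d := by omega
  rw [hdz]
  rw [zpow_neg, zpow_neg, zpow_natCast, zpow_natCast]
  have hpd : (p : ℝ) ^ d ≠ 0 := by positivity
  have hqd : (q : ℝ) ^ d ≠ 0 := by positivity
  have hcast : ((((k : ℤ) - m) : ℤ) : ℝ) + 1 = -(d : ℝ) := by
    have := congrArg (Int.cast : ℤ → ℝ) hdz
    push_cast at this ⊢
    linarith
  rw [hcast]
  have hdne : (d : ℝ) ≠ 0 := by positivity
  field_simp
  ring

lemma Jlog {m : ℕ} (hm : 1 ≤ m) {p q : ℝ} (hp : 0 < p) (hpq : p ≤ q) :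
    ∫ x in Ioc p q, x ^ (m - 1) / x ^ m = Real.log q - Real.log p := by
  have hq : 0 < q := lt_of_lt_of_le hp hpq
  rw [← intervalIntegral.integral_of_le hpq]
  have hcong : EqOn (fun x : ℝ => x ^ (m-1) / x ^ m) (fun x : ℝ => 1 / x) (Set.uIcc p q) := by
    intro x hx
    rw [uIcc_of_le hpq] at hx
    have hx0 : 0 < x := lt_of_lt_of_le hp hx.1
    simp only
    have : m = (m - 1) + 1 := by omega
    rw [this, pow_succ]
    field_simp
    simp
  rw [intervalIntegral.integral_congr hcong]
  have h0 : (0:ℝ) ∉ (Set.uIcc p q) := by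
    rw [uIcc_of_le hpq]
    intro h
    exact absurd h.1 (not_le.mpr hp)
  rw [integral_one_div h0, Real.log_div (ne_of_gt hq) (ne_of_gt hp)]

/-- Finite part of `∫_0^∞ f(x)/x^m dx` for `f` with entire complex extension and
`f(x)/x^m` integrable at infinity: the regularized limit exists and equals
`lim_{a→∞} [c_{m-1} ln a + Σ_{k=m}^∞ c_k a^{k-m+1}/(k-m+1)]`. -/
theorem stmt_1 (f : ℝ → ℝ) (F : ℂ → ℂ) (c : ℕ → ℝ)
    (hF : Differentiable ℂ F) (hFf : ∀ x : ℝ, F x = f x)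
    (hc : ∀ k, (c k : ℂ) = iteratedDeriv k F 0 / (Nat.factorial k))
    (m : ℕ) (hm : 1 ≤ m)
    (hint : IntegrableOn (fun x => f x / x ^ m) (Set.Ici 1)) :
    ∃ L : ℝ,
      Tendsto
        (fun ε : ℝ =>
          (∫ x in Set.Ioi ε, f x / x ^ m) -
            ((∑ k ∈ Finset.range (m - 1),
                c k / (((m - k - 1 : ℕ) : ℝ) * ε ^ (m - k - 1))) -
              c (m - 1) * Real.log ε))
        (nhdsWithin 0 (Set.Ioi 0)) (nhds L) ∧
      Tendsto
        (fun a : ℝ => c (m - 1) * Real.log a +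
          ∑' j : ℕ, c (m + j) * a ^ (j + 1) / (j + 1))
        atTop (nhds L) := by
  -- Taylor expansion of f
  have hsum : ∀ x : ℝ, HasSum (fun k => c k * x ^ k) (f x) := by
    intro x
    have h := Complex.hasSum_taylorSeries_of_entire hF 0 x
    have h2 : HasSum (fun k : ℕ => ((c k * x ^ k : ℝ) : ℂ)) ((f x : ℝ) : ℂ) := by
      rw [← hFf]
      convert h using 2 with k
      case e'_3 => rfl
      push_cast
      rw [smul_eq_mul, smul_eq_mul, hc]
      have : (Nat.factorial k : ℂ) ≠ 0 := by exact_mod_cast Nat.factorial_ne_zero k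
      field_simp
      ring
    exact (Complex.hasSum_ofReal).mp h2
  have hsummable : ∀ x : ℝ, Summable fun k => c k * x ^ k := fun x => (hsum x).summable
  -- continuity of f
  have hfc : Continuous f := by
    have : f = fun x : ℝ => (F x).re := by
      funext x; rw [hFf]; simp
    rw [this]
    exact Complex.continuous_re.comp (hF.continuous.comp Complex.continuous_ofReal)
  -- the remainder function g
  set g : ℝ → ℝ := fun x => ∑' j, c (m + j) * x ^ j with hgdef
  have hgsummable : ∀ x : ℝ, Summable fun j => c (m + j) * x ^ j := by
    intro x
    apply Summable.of_abs
    have := abs_summable_shift hsummable m (abs_nonneg x)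
    apply this.congr
    intro j
    rw [abs_mul, abs_pow]
  have hgsum : ∀ x : ℝ, HasSum (fun j => c (m + j) * x ^ j) (g x) :=
    fun x => (hgsummable x).hasSum
  -- continuity of g
  have hgc : Continuous g := by
    rw [continuous_iff_continuousAt]
    intro x₀
    set R : ℝ := |x₀| + 1 with hRdef
    have hR0 : (0:ℝ) ≤ R := by positivity
    have hcont : ContinuousOn g (Metric.ball x₀ 1) := by
      apply continuousOn_tsum (fun j => (continuous_const.mul (continuous_pow j)).continuousOn)
        (abs_summable_shift hsummable m hR0)
      intro j x hx
      rw [Real.norm_eq_abs]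
      simp only [Pi.mul_apply]
      rw [abs_mul, abs_pow]
      have hxR : |x| ≤ R := by
        have := Metric.mem_ball.mp hx
        rw [Real.dist_eq] at this
        calc |x| = |x₀ + (x - x₀)| := by ring_nf
        _ ≤ |x₀| + |x - x₀| := abs_add_le _ _
        _ ≤ |x₀| + 1 := by linarith [(abs_sub_comm x x₀ ▸ this.le)]
      exact mul_le_mul_of_nonneg_left (pow_le_pow_left₀ (abs_nonneg x) hxR j) (abs_nonneg _)
    exact hcont.continuousAt (Metric.ball_mem_nhds x₀ one_pos)
  -- key algebraic identity
  have hkey : ∀ x : ℝ, x ≠ 0 →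
      f x / x ^ m = g x + ∑ k ∈ Finset.range m, c k * (x ^ k / x ^ m) := by
    intro x hx
    have hxm : x ^ m ≠ 0 := pow_ne_zero m hx
    have h1 : ∑ k ∈ Finset.range m, c k * x ^ k + ∑' j, c (j + m) * x ^ (j + m) = f x := by
      rw [Summable.sum_add_tsum_nat_add m (hsummable x), (hsum x).tsum_eq]
    have h2 : ∑' j, c (j + m) * x ^ (j + m) = g x * x ^ m := by
      rw [← tsum_mul_right]
      apply tsum_congr
      intro j
      rw [add_comm j m, pow_add]
      ring
    have hfx : f x = (∑ k ∈ Finset.range m, c k * x ^ k) + g x * x ^ m := by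
      rw [← h1, h2]
    rw [hfx, add_div, Finset.sum_div, mul_div_cancel_right₀ _ hxm, add_comm]
    congr 1
    apply Finset.sum_congr rfl
    intro k _
    rw [mul_div_assoc]
  -- integrability facts
  have hfint : ∀ {p q : ℝ}, 0 < p → IntegrableOn (fun x => f x / x ^ m) (Ioc p q) := by
    intro p q hp
    apply (ContinuousOn.integrableOn_Icc ?_).mono_set Ioc_subset_Icc_self
    exact ContinuousOn.div hfc.continuousOn (continuous_pow m).continuousOn
      (fun x hx => pow_ne_zero m (ne_of_gt (lt_of_lt_of_le hp hx.1)))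
  have hpint : ∀ (k : ℕ) {p q : ℝ}, 0 < p → IntegrableOn (fun x => x ^ k / x ^ m) (Ioc p q) := by
    intro k p q hp
    apply (ContinuousOn.integrableOn_Icc ?_).mono_set Ioc_subset_Icc_self
    exact ContinuousOn.div (continuous_pow k).continuousOn (continuous_pow m).continuousOn
      (fun x hx => pow_ne_zero m (ne_of_gt (lt_of_lt_of_le hp hx.1)))
  have hgint : ∀ p q : ℝ, IntegrableOn g (Ioc p q) := fun p q => hgc.integrableOn_Ioc
  have hint1 : IntegrableOn (fun x => f x / x ^ m) (Ioi 1) :=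
    hint.mono_set Ioi_subset_Ici_self
  -- splitting of the integral over Ioc p q
  have hsplit : ∀ {p q : ℝ}, 0 < p →
      ∫ x in Ioc p q, f x / x ^ m =
        (∫ x in Ioc p q, g x) + ∑ k ∈ Finset.range m, c k * ∫ x in Ioc p q, x ^ k / x ^ m := by
    intro p q hp
    have h1 : EqOn (fun x => f x / x ^ m)
        (fun x => g x + ∑ k ∈ Finset.range m, c k * (x ^ k / x ^ m)) (Ioc p q) :=
      fun x hx => hkey x (ne_of_gt (lt_trans hp hx.1))
    rw [setIntegral_congr_fun measurableSet_Ioc h1,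
      integral_add (hgint p q) (integrable_finset_sum _
        (fun k _ => ((hpint k hp).const_mul (c k)))),
      integral_finset_sum _ (fun k _ => ((hpint k hp).const_mul (c k)))]
    congr 1
    apply Finset.sum_congr rfl
    intro k _
    rw [MeasureTheory.integral_const_mul]
  -- value of the integral of g on Ioc 0 a
  have hGval : ∀ {a : ℝ}, 0 ≤ a →
      ∫ x in Ioc 0 a, g x = ∑' j : ℕ, c (m + j) * a ^ (j + 1) / (j + 1) := by
    intro a ha
    have hFint : ∀ j : ℕ, Integrable (fun x => c (m + j) * x ^ j)
        (volume.restrict (Ioc 0 a)) :=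
      fun j => (continuous_const.mul (continuous_pow j)).integrableOn_Ioc
    have hval : ∀ j : ℕ, ∫ x in Ioc 0 a, c (m + j) * x ^ j
        = c (m + j) * a ^ (j + 1) / (j + 1) := by
      intro j
      rw [← intervalIntegral.integral_of_le ha, intervalIntegral.integral_const_mul,
        integral_pow]
      rw [zero_pow (Nat.succ_ne_zero j)]
      push_cast
      ring
    have hnorm : ∀ j : ℕ, ∫ x in Ioc 0 a, ‖c (m + j) * x ^ j‖
        = |c (m + j)| * a ^ (j + 1) / (j + 1) := by
      intro j
      have heq : EqOn (fun x => ‖c (m + j) * x ^ j‖) (fun x => |c (m + j)| * x ^ j)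
          (Ioc 0 a) := by
        intro x hx
        simp only [Real.norm_eq_abs, abs_mul, abs_pow, abs_of_pos hx.1]
      rw [setIntegral_congr_fun measurableSet_Ioc heq,
        ← intervalIntegral.integral_of_le ha, intervalIntegral.integral_const_mul,
        integral_pow, zero_pow (Nat.succ_ne_zero j)]
      push_cast
      ring
    have hsumm : Summable fun j => ∫ x in Ioc 0 a, ‖c (m + j) * x ^ j‖ := by
      apply Summable.of_nonneg_of_le
        (fun j => integral_nonneg (fun x => norm_nonneg _)) (fun j => ?_)
        ((abs_summable_shift hsummable m ha).mul_left a)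
      rw [hnorm j]
      have hj1 : (1 : ℝ) ≤ (j : ℝ) + 1 := le_add_of_nonneg_left (Nat.cast_nonneg j)
      calc |c (m + j)| * a ^ (j + 1) / (j + 1)
          ≤ |c (m + j)| * a ^ (j + 1) := div_le_self (by positivity) hj1
        _ = a * (|c (m + j)| * a ^ j) := by rw [pow_succ]; ring
    have hhs := MeasureTheory.hasSum_integral_of_summable_integral_norm hFint hsumm
    have h2 : (∑' j : ℕ, ∫ x in Ioc 0 a, c (m + j) * x ^ j) = ∫ x in Ioc 0 a, g x :=
      hhs.tsum_eq
    rw [← h2]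
    exact tsum_congr hval
  obtain ⟨n, rfl⟩ : ∃ n, m = n + 1 := ⟨m - 1, by omega⟩
  have hsimp : ∀ k : ℕ, n + 1 - k - 1 = n - k := fun k => by omega
  set L : ℝ := (∫ x in Ioc 0 1, g x) +
    ((∫ x in Ioi 1, f x / x ^ (n + 1)) -
      ∑ k ∈ Finset.range n, c k / ((n - k : ℕ) : ℝ)) with hL
  refine ⟨L, ?_, ?_⟩
  · -- first limit
    have hc1 : Continuous fun ε : ℝ => ∫ x in (1:ℝ)..ε, g x :=
      intervalIntegral.continuous_primitive (fun a b => hgc.intervalIntegrable a b) 1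
    have hc2 : Tendsto (fun ε : ℝ => ∫ x in ε..(1:ℝ), g x) (nhdsWithin 0 (Ioi 0))
        (nhds (∫ x in (0:ℝ)..1, g x)) := by
      have h := ((hc1.neg).tendsto 0).mono_left (nhdsWithin_le_nhds (s := Ioi (0:ℝ)))
      have he : (fun ε : ℝ => ∫ x in ε..(1:ℝ), g x)
          = fun ε : ℝ => -∫ x in (1:ℝ)..ε, g x := by
        funext ε
        rw [intervalIntegral.integral_symm]
      rw [he]
      convert h using 2
      simp only [Pi.neg_apply]
      rw [intervalIntegral.integral_symm]
      rfl
    have htend : Tendsto (fun ε : ℝ => (∫ x in Ioc ε 1, g x) +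
        ((∫ x in Ioi 1, f x / x ^ (n + 1)) -
          ∑ k ∈ Finset.range n, c k / ((n - k : ℕ) : ℝ)))
        (nhdsWithin 0 (Ioi 0)) (nhds L) := by
      rw [hL, show (∫ x in Ioc 0 1, g x) = ∫ x in (0:ℝ)..1, g x from
        (intervalIntegral.integral_of_le zero_le_one).symm]
      apply Tendsto.add_const
      apply hc2.congr'
      filter_upwards [Ioo_mem_nhdsGT one_pos] with ε hε
      exact intervalIntegral.integral_of_le hε.2.le
    apply htend.congr'
    filter_upwards [Ioo_mem_nhdsGT one_pos] with ε hε
    obtain ⟨hε0, hε1⟩ := hε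
    -- split the integral over Ioi ε
    have hsplit1 : ∫ x in Ioi ε, f x / x ^ (n + 1) =
        (∫ x in Ioc ε 1, f x / x ^ (n + 1)) + ∫ x in Ioi 1, f x / x ^ (n + 1) := by
      rw [← Ioc_union_Ioi_eq_Ioi hε1.le,
        setIntegral_union (Ioc_disjoint_Ioi le_rfl) measurableSet_Ioi (hfint hε0) hint1]
    have hsplit2 := hsplit (p := ε) (q := 1) hε0
    have hsum2 : ∑ k ∈ Finset.range (n + 1),
        c k * ∫ x in Ioc ε 1, x ^ k / x ^ (n + 1)
        = (∑ k ∈ Finset.range n, c k * (1 / (((n - k : ℕ) : ℝ) * ε ^ (n - k))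
            - 1 / (((n - k : ℕ) : ℝ) * 1 ^ (n - k))))
          + c n * (Real.log 1 - Real.log ε) := by
      rw [Finset.sum_range_succ]
      congr 1
      · apply Finset.sum_congr rfl
        intro k hk
        have hk' : k + 2 ≤ n + 1 := by
          have := Finset.mem_range.mp hk; omega
        rw [Jpow hk' hε0 hε1.le, hsimp]
      · have := Jlog (m := n + 1) (by omega) hε0 hε1.le
        rw [show n + 1 - 1 = n from rfl] at this
        rw [this]
    -- now pure algebra
    simp only [Nat.add_sub_cancel, hsimp]
    rw [hsplit1, hsplit2, hsum2]
    have halg : ∀ k ∈ Finset.range n,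
        c k * (1 / (((n - k : ℕ) : ℝ) * ε ^ (n - k))
            - 1 / (((n - k : ℕ) : ℝ) * 1 ^ (n - k)))
          - c k / (((n - k : ℕ) : ℝ) * ε ^ (n - k))
        = -(c k / ((n - k : ℕ) : ℝ)) := by
      intro k hk
      have hk' : k < n := Finset.mem_range.mp hk
      have hD : (0 : ℝ) < ((n - k : ℕ) : ℝ) := by
        have : 0 < n - k := by omega
        exact_mod_cast this
      have hεd : ε ^ (n - k) ≠ 0 := by positivity
      rw [one_pow]
      field_simp
      ring
    have hsum3 : ∑ k ∈ Finset.range n, (c k * (1 / (((n - k : ℕ) : ℝ) * ε ^ (n - k))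
            - 1 / (((n - k : ℕ) : ℝ) * 1 ^ (n - k)))
          - c k / (((n - k : ℕ) : ℝ) * ε ^ (n - k)))
        = -∑ k ∈ Finset.range n, c k / ((n - k : ℕ) : ℝ) := by
      rw [← Finset.sum_neg_distrib]
      exact Finset.sum_congr rfl halg
    rw [Finset.sum_sub_distrib] at hsum3
    rw [Real.log_one]
    linarith [hsum3]
  · -- second limit
    have hPsi : ∀ a : ℝ, 1 ≤ a →
        c (n + 1 - 1) * Real.log a + ∑' j : ℕ, c (n + 1 + j) * a ^ (j + 1) / (j + 1)
        = (∫ x in Ioc 0 1, g x) + (∫ x in Ioc 1 a, f x / x ^ (n + 1))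
          - ∑ k ∈ Finset.range n, c k / ((n - k : ℕ) : ℝ)
          + ∑ k ∈ Finset.range n, c k / (((n - k : ℕ) : ℝ) * a ^ (n - k)) := by
      intro a ha
      have ha0 : (0:ℝ) ≤ a := by linarith
      have e1 : ∫ x in Ioc 0 a, g x = (∫ x in Ioc 0 1, g x) + ∫ x in Ioc 1 a, g x := by
        rw [← Ioc_union_Ioc_eq_Ioc zero_le_one ha,
          setIntegral_union (Ioc_disjoint_Ioc_of_le le_rfl) measurableSet_Ioc (hgint 0 1) (hgint 1 a)]
      have e2 := hsplit (p := (1:ℝ)) (q := a) one_pos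
      have e3 : ∑ k ∈ Finset.range (n + 1), c k * ∫ x in Ioc 1 a, x ^ k / x ^ (n + 1)
          = (∑ k ∈ Finset.range n, c k * (1 / (((n - k : ℕ) : ℝ) * 1 ^ (n - k))
              - 1 / (((n - k : ℕ) : ℝ) * a ^ (n - k))))
            + c n * (Real.log a - Real.log 1) := by
        rw [Finset.sum_range_succ]
        congr 1
        · apply Finset.sum_congr rfl
          intro k hk
          have hk' : k + 2 ≤ n + 1 := by
            have := Finset.mem_range.mp hk; omega
          rw [Jpow hk' one_pos ha, hsimp]
        · have := Jlog (m := n + 1) (by omega) one_pos ha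
          rw [show n + 1 - 1 = n from rfl] at this
          rw [this]
      rw [e3, Real.log_one] at e2
      have hsum4 : ∑ k ∈ Finset.range n, c k * (1 / (((n - k : ℕ) : ℝ) * 1 ^ (n - k))
              - 1 / (((n - k : ℕ) : ℝ) * a ^ (n - k)))
          = (∑ k ∈ Finset.range n, c k / ((n - k : ℕ) : ℝ))
            - ∑ k ∈ Finset.range n, c k / (((n - k : ℕ) : ℝ) * a ^ (n - k)) := by
        rw [← Finset.sum_sub_distrib]
        apply Finset.sum_congr rfl
        intro k hk
        have hk' : k < n := Finset.mem_range.mp hk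
        have hD : (0 : ℝ) < ((n - k : ℕ) : ℝ) := by
          have : 0 < n - k := by omega
          exact_mod_cast this
        have hε : (0:ℝ) < a := by linarith
        have had : a ^ (n - k) ≠ 0 := by positivity
        rw [one_pow]
        field_simp
      rw [hsum4] at e2
      simp only [Nat.add_sub_cancel]
      rw [← hGval ha0, e1]
      linarith [e2]
    have t1 : Tendsto (fun a : ℝ => ∫ x in Ioc 1 a, f x / x ^ (n + 1)) atTop
        (nhds (∫ x in Ioi 1, f x / x ^ (n + 1))) := by
      have h := MeasureTheory.intervalIntegral_tendsto_integral_Ioi 1 hint1 tendsto_id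
      apply h.congr'
      filter_upwards [eventually_ge_atTop (1:ℝ)] with a ha
      exact intervalIntegral.integral_of_le ha
    have t2 : Tendsto (fun a : ℝ => ∑ k ∈ Finset.range n,
        c k / (((n - k : ℕ) : ℝ) * a ^ (n - k))) atTop (nhds 0) := by
      have h0 : (0:ℝ) = ∑ k ∈ Finset.range n, (0:ℝ) := by simp
      rw [h0]
      apply tendsto_finset_sum
      intro k hk
      have hk' : k < n := Finset.mem_range.mp hk
      have hd0 : n - k ≠ 0 := by omega
      have hp : Tendsto (fun a : ℝ => a ^ (n - k)) atTop atTop := tendsto_pow_atTop hd0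
      have h1 := (hp.inv_tendsto_atTop).const_mul (c k / ((n - k : ℕ) : ℝ))
      rw [mul_zero] at h1
      apply h1.congr
      intro a
      simp only [Pi.inv_apply, div_eq_mul_inv, mul_inv, mul_assoc]
    have htends : Tendsto (fun a : ℝ =>
        (∫ x in Ioc 0 1, g x) + (∫ x in Ioc 1 a, f x / x ^ (n + 1))
          - ∑ k ∈ Finset.range n, c k / ((n - k : ℕ) : ℝ)
          + ∑ k ∈ Finset.range n, c k / (((n - k : ℕ) : ℝ) * a ^ (n - k)))
        atTop (nhds L) := by
      have h := (((tendsto_const_nhds (x := (∫ x in Ioc 0 1, g x))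
        (f := atTop (α := ℝ))).add t1).sub
        (tendsto_const_nhds (x := ∑ k ∈ Finset.range n, c k / ((n - k : ℕ) : ℝ)))).add t2
      rw [add_zero] at h
      convert h using 2
      rw [hL]
      ring
    apply htends.congr'
    filter_upwards [eventually_ge_atTop (1:ℝ)] with a ha
    exact (hPsi a ha).symm
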